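/- Let (λ_n) be an increasing sequence of positive real numbers satisfying property (FHCSG). Then for any d ≥ 1, any δ > 0 and any B > 0, there exists q > 0 such that for any N ∈ ℕ there exist finitely many elements (x_{n,k})_{N ≤ n ≤ N+q−1, 1 ≤ k ≤ p_n} of the Euclidean unit sphere S^{d−1} of ℝ^d such that: (A) S^{d−1} ⊆ ⋃_{n=N}^{N+q−1} ⋃_{k=1}^{p_n} B(x_{n,k}, δ/λ_n); and (B) for all admissible (n,k) ≠ (m,j), ‖λ_n x_{n,k} − λ_m x_{m,j}‖ ≥ B. -/

import Mathlib

open Metric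


lemma sep_card_bound {X : Type*} [PseudoMetricSpace X] {K : Set X} (hK : IsCompact K) {ε : ℝ}
    (hε : 0 < ε) :
    ∃ T : ℕ, ∀ A : Finset X, ↑A ⊆ K →
      (∀ x ∈ A, ∀ y ∈ A, x ≠ y → ε ≤ dist x y) → A.card ≤ T := by
  classical
  obtain ⟨t, htfin, hcov⟩ := Metric.totallyBounded_iff.mp hK.totallyBounded (ε/2) (by positivity)
  refine ⟨htfin.toFinset.card, fun A hAK hsep => ?_⟩
  have hex : ∀ x ∈ A, ∃ y ∈ t, x ∈ ball y (ε/2) := by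
    intro x hx
    have := hcov (hAK hx)
    simpa using this
  set f : X → X := fun x => if h : ∃ y ∈ t, x ∈ ball y (ε/2) then h.choose else x with hf
  have hfspec : ∀ x ∈ A, f x ∈ t ∧ dist x (f x) < ε/2 := by
    intro x hx
    have h := hex x hx
    rw [hf]
    simp only [dif_pos h]
    obtain ⟨h1, h2⟩ := h.choose_spec
    exact ⟨h1, by simpa [dist_comm] using h2⟩
  apply Finset.card_le_card_of_injOn f
  · intro x hx
    exact htfin.mem_toFinset.mpr (hfspec x hx).1
  · intro x hx y hy hxy
    by_contra hne
    have h1 := (hfspec x (by simpa using hx)).2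
    have h2 := (hfspec y (by simpa using hy)).2
    have h3 := hsep x (by simpa using hx) y (by simpa using hy) hne
    have h4 : dist x y ≤ dist x (f x) + dist (f y) y := by
      rw [hxy]; exact dist_triangle _ _ _
    rw [dist_comm (f y) y] at h4
    linarith

lemma exists_max_sep {X : Type*} [PseudoMetricSpace X] {K : Set X} (hK : IsCompact K) {ε : ℝ}
    (hε : 0 < ε) :
    ∃ G : Finset X, ↑G ⊆ K ∧ (∀ x ∈ G, ∀ y ∈ G, x ≠ y → ε ≤ dist x y) ∧
      ∀ z ∈ K, ∃ g ∈ G, dist z g < ε := by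
  classical
  obtain ⟨T, hT⟩ := sep_card_bound hK hε
  set S := {n : ℕ | ∃ G : Finset X, ↑G ⊆ K ∧
    (∀ x ∈ G, ∀ y ∈ G, x ≠ y → ε ≤ dist x y) ∧ G.card = n} with hS
  have h0 : 0 ∈ S := ⟨∅, by simp, by simp, rfl⟩
  have hbdd : BddAbove S := ⟨T, by rintro n ⟨G, h1, h2, rfl⟩; exact hT G h1 h2⟩
  obtain ⟨G, hG1, hG2, hG3⟩ := Nat.sSup_mem ⟨0, h0⟩ hbdd
  refine ⟨G, hG1, hG2, ?_⟩
  intro z hz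
  by_contra hcon
  push_neg at hcon
  have hzG : z ∉ G := by
    intro h
    have := hcon z h
    simp at this
    linarith
  have hmem : G.card + 1 ∈ S := by
    refine ⟨insert z G, ?_, ?_, by rw [Finset.card_insert_of_notMem hzG]⟩
    · rw [Finset.coe_insert]
      exact Set.insert_subset hz hG1
    · intro x hx y hy hxy
      rcases Finset.mem_insert.mp hx with rfl | hx'
      · rcases Finset.mem_insert.mp hy with rfl | hy'
        · exact absurd rfl hxy
        · exact hcon y hy'
      · rcases Finset.mem_insert.mp hy with rfl | hy'
        · rw [dist_comm]; exact hcon x hx'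
        · exact hG2 x hx' y hy' hxy
  have := le_csSup hbdd hmem
  omega


lemma coloring {X : Type*} [PseudoMetricSpace X] {s : ℝ} (hs : 0 < s) (T : ℕ) :
    ∀ G : Finset X, (∀ g ∈ G, (G.filter (fun h => dist g h < s)).card ≤ T) →
      ∃ f : X → ℕ, (∀ g ∈ G, f g < T) ∧
        (∀ g ∈ G, ∀ h ∈ G, g ≠ h → f g = f h → s ≤ dist g h) := by
  classical
  intro G
  induction G using Finset.strongInduction with
  | _ G ih =>
    intro hdeg
    rcases G.eq_empty_or_nonempty with rfl | ⟨g₀, hg₀⟩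
    · exact ⟨fun _ => 0, by simp, by simp⟩
    · have hsub : G.erase g₀ ⊂ G := Finset.erase_ssubset hg₀
      obtain ⟨f', hf1, hf2⟩ := ih _ hsub (fun g hg => le_trans (Finset.card_le_card
        (Finset.filter_subset_filter _ (Finset.erase_subset _ _)))
        (hdeg g (Finset.mem_of_mem_erase hg)))
      set Nb := (G.erase g₀).filter (fun h => dist g₀ h < s) with hNbdef
      have hg₀f : g₀ ∈ G.filter (fun h => dist g₀ h < s) :=
        Finset.mem_filter.mpr ⟨hg₀, by simpa using hs⟩
      have hNbcard : Nb.card < T := by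
        have h1 : Nb = (G.filter (fun h => dist g₀ h < s)).erase g₀ := by
          rw [hNbdef, Finset.filter_erase]
        have h2 : (G.filter (fun h => dist g₀ h < s)).card ≤ T := hdeg g₀ hg₀
        have h3 : (G.filter (fun h => dist g₀ h < s)).card ≠ 0 :=
          Finset.card_ne_zero_of_mem hg₀f
        rw [h1, Finset.card_erase_of_mem hg₀f]
        omega
      have himg : (Nb.image f').card < (Finset.range T).card := by
        rw [Finset.card_range]
        exact lt_of_le_of_lt Finset.card_image_le hNbcard
      obtain ⟨c, hcT, hcnot⟩ := Finset.not_subset.mp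
        (fun hsub => absurd (Finset.card_le_card hsub) (not_le.mpr himg))
      refine ⟨Function.update f' g₀ c, ?_, ?_⟩
      · intro g hg
        by_cases hgg : g = g₀
        · subst hgg; rw [Function.update_self]; exact Finset.mem_range.mp hcT
        · rw [Function.update_of_ne hgg]; exact hf1 g (Finset.mem_erase.mpr ⟨hgg, hg⟩)
      · intro x hx y hy hxy hfeq
        by_cases hx0 : x = g₀ <;> by_cases hy0 : y = g₀
        · exact absurd (hx0.trans hy0.symm) hxy
        · subst hx0
          rw [Function.update_self, Function.update_of_ne hy0] at hfeq
          by_contra hlt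
          push_neg at hlt
          have hyNb : y ∈ Nb := Finset.mem_filter.mpr ⟨Finset.mem_erase.mpr ⟨hy0, hy⟩, hlt⟩
          exact hcnot (Finset.mem_image.mpr ⟨y, hyNb, hfeq.symm⟩)
        · subst hy0
          rw [Function.update_of_ne hx0, Function.update_self] at hfeq
          by_contra hlt
          push_neg at hlt
          have hxNb : x ∈ Nb := Finset.mem_filter.mpr
            ⟨Finset.mem_erase.mpr ⟨hx0, hx⟩, by rwa [dist_comm]⟩
          exact hcnot (Finset.mem_image.mpr ⟨x, hxNb, hfeq⟩)
        · rw [Function.update_of_ne hx0, Function.update_of_ne hy0] at hfeq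
          exact hf2 x (Finset.mem_erase.mpr ⟨hx0, hx⟩) y (Finset.mem_erase.mpr ⟨hy0, hy⟩) hxy hfeq

lemma telescope (lam : ℕ → ℝ) (hgap : ∀ n, 1 ≤ n → lam n + 1 ≤ lam (n + 1)) :
    ∀ n, 1 ≤ n → ∀ t : ℕ, lam n + t ≤ lam (n + t) := by
  intro n hn t
  induction t with
  | zero => simp
  | succ t ih =>
    have h1 := hgap (n + t) (by omega)
    push_cast
    push_cast at ih
    have : n + (t + 1) = n + t + 1 := by omega
    rw [this]
    linarith

lemma geom_sum_bound (lam : ℕ → ℝ) (hpos : ∀ n, 0 < lam n) (hmono : StrictMono lam)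
    {L : ℕ} (hL : 1 ≤ L) :
    ∀ (W a' : ℕ), (∀ m, a' ≤ m → m + L ≤ a' + W → 2 * lam m ≤ lam (m + L)) →
      ∑ n ∈ Finset.Ico a' (a' + W), (lam n)⁻¹ ≤ 2 * L * (lam a')⁻¹ := by
  intro W
  induction W using Nat.strong_induction_on with
  | _ W ih =>
    intro a' hyp
    have hposI : (0:ℝ) < lam a' := hpos a'
    by_cases hWL : W ≤ L
    · have hbound : ∀ n ∈ Finset.Ico a' (a' + W), (lam n)⁻¹ ≤ (lam a')⁻¹ := by
        intro n hn
        rw [Finset.mem_Ico] at hn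
        exact inv_anti₀ hposI (hmono.monotone hn.1)
      calc ∑ n ∈ Finset.Ico a' (a' + W), (lam n)⁻¹
          ≤ (Finset.Ico a' (a' + W)).card • (lam a')⁻¹ :=
            Finset.sum_le_card_nsmul _ _ _ hbound
        _ = (W:ℝ) * (lam a')⁻¹ := by
            have hW : a' + W - a' = W := by omega
            rw [Nat.card_Ico, hW, nsmul_eq_mul]
        _ ≤ 2 * L * (lam a')⁻¹ := by
            have hWL' : (W:ℝ) ≤ 2*L := by exact_mod_cast le_trans hWL (by omega)
            have hinv : (0:ℝ) ≤ (lam a')⁻¹ := by positivity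
            exact mul_le_mul_of_nonneg_right hWL' hinv
    · push_neg at hWL
      have hsplit : a' + W = (a' + L) + (W - L) := by omega
      rw [hsplit, ← Finset.sum_Ico_consecutive _ (Nat.le_add_right a' L) (by omega)]
      have h1 : ∑ n ∈ Finset.Ico a' (a' + L), (lam n)⁻¹ ≤ (L:ℝ) * (lam a')⁻¹ := by
        have hbound : ∀ n ∈ Finset.Ico a' (a' + L), (lam n)⁻¹ ≤ (lam a')⁻¹ := by
          intro n hn
          rw [Finset.mem_Ico] at hn
          exact inv_anti₀ hposI (hmono.monotone hn.1)
        calc ∑ n ∈ Finset.Ico a' (a' + L), (lam n)⁻¹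
            ≤ (Finset.Ico a' (a' + L)).card • (lam a')⁻¹ :=
              Finset.sum_le_card_nsmul _ _ _ hbound
          _ = (L:ℝ) * (lam a')⁻¹ := by
              have hW : a' + L - a' = L := by omega
              rw [Nat.card_Ico, hW, nsmul_eq_mul]
      have h2 := ih (W - L) (by omega) (a' + L) (fun m hm hml => hyp m (by omega) (by omega))
      have h3 : 2 * lam a' ≤ lam (a' + L) := hyp a' le_rfl (by omega)
      have h4 : (lam (a' + L))⁻¹ ≤ (2 * lam a')⁻¹ := inv_anti₀ (by positivity) h3
      have h5 : 2 * (L:ℝ) * (lam (a' + L))⁻¹ ≤ (L:ℝ) * (lam a')⁻¹ := by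
        have heq : (2:ℝ) * L * (2 * lam a')⁻¹ = L * (lam a')⁻¹ := by
          field_simp
        calc 2 * (L:ℝ) * (lam (a' + L))⁻¹ ≤ 2 * L * (2 * lam a')⁻¹ :=
              mul_le_mul_of_nonneg_left h4 (by positivity)
          _ = L * (lam a')⁻¹ := heq
      linarith

noncomputable def pickF {α : Type*} (z : α) (s : Finset α) (k : ℕ) : α :=
  if h : k - 1 < s.card then (s.equivFin.symm ⟨k - 1, h⟩ : α) else z

lemma pickF_mem {α : Type*} (z : α) (s : Finset α) {k : ℕ} (hk1 : 1 ≤ k) (hk2 : k ≤ s.card) :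
    pickF z s k ∈ s := by
  have h : k - 1 < s.card := by omega
  rw [pickF, dif_pos h]
  exact (s.equivFin.symm ⟨k - 1, h⟩).2

lemma pickF_inj {α : Type*} (z : α) (s : Finset α) {k j : ℕ} (hk1 : 1 ≤ k) (hk2 : k ≤ s.card)
    (hj1 : 1 ≤ j) (hj2 : j ≤ s.card) (hkj : k ≠ j) : pickF z s k ≠ pickF z s j := by
  have hk : k - 1 < s.card := by omega
  have hj : j - 1 < s.card := by omega
  simp only [pickF]
  rw [dif_pos hk, dif_pos hj]
  intro h
  have h2 := s.equivFin.symm.injective (Subtype.coe_injective h)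
  have h3 : k - 1 = j - 1 := by simpa using congrArg Fin.val h2
  omega

lemma pickF_eq {α : Type*} (z : α) (s : Finset α) {g : α} (hg : g ∈ s) :
    ∃ k, 1 ≤ k ∧ k ≤ s.card ∧ pickF z s k = g := by
  refine ⟨(s.equivFin ⟨g, hg⟩).val + 1, by omega, ?_, ?_⟩
  · have := (s.equivFin ⟨g, hg⟩).2
    omega
  · have h : (s.equivFin ⟨g, hg⟩).val + 1 - 1 < s.card := by
      simpa using (s.equivFin ⟨g, hg⟩).2
    rw [pickF, dif_pos h]
    have heq : (⟨(s.equivFin ⟨g, hg⟩).val + 1 - 1, h⟩ : Fin s.card) = s.equivFin ⟨g, hg⟩ := by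
      ext; simp
    rw [heq, Equiv.symm_apply_apply]

/-- a sequence with property (FHCSG) yields, for each `d ≥ 1`, `δ > 0`
and `B > 0`, coverings of the unit sphere `S^{d-1}` of controlled size `q` starting at
any index `N`, with `B`-separation of the dilated centers. -/
theorem stmt_18 (lam : ℕ → ℝ) (hpos : ∀ n, 0 < lam n) (hmono : StrictMono lam)
    (hgap : ∀ n, 1 ≤ n → lam n + 1 ≤ lam (n + 1))
    (hFHCSG : ∀ C : ℝ, 0 < C → ∃ p : ℕ, ∀ N : ℕ, 1 ≤ N →
      C / lam N ≤ ∑ n ∈ Finset.Icc (N + 1) (N + p), (lam n)⁻¹) :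
    ∀ d : ℕ, 1 ≤ d → ∀ δ : ℝ, 0 < δ → ∀ B : ℝ, 0 < B →
      ∃ q : ℕ, 0 < q ∧ ∀ N : ℕ,
        ∃ p : ℕ → ℕ, ∃ x : ℕ → ℕ → EuclideanSpace ℝ (Fin d),
          (∀ n k, N ≤ n → n ≤ N + q - 1 → 1 ≤ k → k ≤ p n → ‖x n k‖ = 1) ∧
          (∀ y : EuclideanSpace ℝ (Fin d), ‖y‖ = 1 →
            ∃ n k, N ≤ n ∧ n ≤ N + q - 1 ∧ 1 ≤ k ∧ k ≤ p n ∧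
              y ∈ Metric.ball (x n k) (δ / lam n)) ∧
          (∀ n m k j, N ≤ n → n ≤ N + q - 1 → N ≤ m → m ≤ N + q - 1 →
            1 ≤ k → k ≤ p n → 1 ≤ j → j ≤ p m → (n, k) ≠ (m, j) →
            B ≤ ‖lam n • x n k - lam m • x m j‖) := by
  intro d _hd δ hδ B hB
  classical
  -- the uniform packing constant
  obtain ⟨T₀, hT₀⟩ := sep_card_bound
    (isCompact_closedBall (0 : EuclideanSpace ℝ (Fin d)) (2 * B / δ)) (one_pos)
  set T : ℕ := T₀ + 1 with hTdef
  set b : ℕ := ⌈B⌉₊ with hbdef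
  have hb1 : 1 ≤ b := Nat.one_le_iff_ne_zero.mpr (by
    simp only [hbdef, ne_eq, Nat.ceil_eq_zero, not_le]
    exact hB)
  have hbB : B ≤ (b : ℝ) := Nat.le_ceil B
  set L : ℕ := T * b with hLdef
  have hL1 : 1 ≤ L := by
    rw [hLdef]
    exact Nat.one_le_iff_ne_zero.mpr (Nat.mul_ne_zero (by omega) (by omega))
  obtain ⟨p, hp⟩ := hFHCSG (2 * L + 1) (by positivity)
  obtain ⟨PL, hPL⟩ : ∃ x, x = p * L := ⟨_, rfl⟩
  refine ⟨PL + L + 3, by omega, ?_⟩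
  intro N
  set N' : ℕ := max N 1 with hN'def
  have hN'1 : 1 ≤ N' := le_max_right _ _
  have hNN' : N ≤ N' := le_max_left _ _
  have hN'N : N' ≤ N + 1 := max_le (by omega) (by omega)
  -- find a window [a, a+L] in which lam at most doubles
  have hfind : ∃ a, N' + 1 ≤ a ∧ a + L ≤ N' + 1 + PL ∧ lam (a + L) < 2 * lam a := by
    by_contra hcon
    push_neg at hcon
    have hyp : ∀ m, N' + 1 ≤ m → m + L ≤ (N' + 1) + PL → 2 * lam m ≤ lam (m + L) :=
      fun m h1 h2 => hcon m h1 (by omega)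
    have hsum := geom_sum_bound lam hpos hmono hL1 PL (N' + 1) hyp
    have hsub : Finset.Icc (N' + 1) (N' + p) ⊆ Finset.Ico (N' + 1) (N' + 1 + PL) := by
      intro n hn
      simp only [Finset.mem_Icc, Finset.mem_Ico] at *
      have hple : p ≤ p * L := Nat.le_mul_of_pos_right p (by omega)
      omega
    have hsum2 : ∑ n ∈ Finset.Icc (N' + 1) (N' + p), (lam n)⁻¹ ≤
        ∑ n ∈ Finset.Ico (N' + 1) (N' + 1 + PL), (lam n)⁻¹ :=
      Finset.sum_le_sum_of_subset_of_nonneg hsub (fun i _ _ => inv_nonneg.mpr (hpos i).le)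
    have hmain := hp N' hN'1
    have hmono1 : (lam (N' + 1))⁻¹ ≤ (lam N')⁻¹ :=
      inv_anti₀ (hpos N') (hmono (Nat.lt_succ_self N')).le
    have hchain : (2 * (L:ℝ) + 1) / lam N' ≤ 2 * L * (lam N')⁻¹ := by
      calc (2 * (L:ℝ) + 1) / lam N' ≤ ∑ n ∈ Finset.Icc (N' + 1) (N' + p), (lam n)⁻¹ := hmain
        _ ≤ ∑ n ∈ Finset.Ico (N' + 1) (N' + 1 + PL), (lam n)⁻¹ := hsum2
        _ ≤ 2 * L * (lam (N' + 1))⁻¹ := hsum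
        _ ≤ 2 * L * (lam N')⁻¹ := by
            apply mul_le_mul_of_nonneg_left hmono1 (by positivity)
    rw [div_eq_mul_inv] at hchain
    have hinvpos : 0 < (lam N')⁻¹ := inv_pos.mpr (hpos N')
    have := (mul_le_mul_iff_of_pos_right hinvpos).mp hchain
    linarith
  obtain ⟨a, ha1, ha2, ha3⟩ := hfind
  have ha1' : 1 ≤ a := by omega
  have hla : 0 < lam a := hpos a
  have hεpos : 0 < δ / (2 * lam a) := by positivity
  have hspos : 0 < B / lam a := by positivity
  obtain ⟨G, hGsub, hGsep, hGcov⟩ :=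
    exists_max_sep (isCompact_sphere (0 : EuclideanSpace ℝ (Fin d)) 1) hεpos
  -- degree bound for the coloring
  have hdeg : ∀ g ∈ G, (G.filter (fun h => dist g h < B / lam a)).card ≤ T := by
    intro g hg
    set φ : EuclideanSpace ℝ (Fin d) → EuclideanSpace ℝ (Fin d) :=
      fun u => (δ / (2 * lam a))⁻¹ • (u - g) with hφdef
    have hεne : (δ / (2 * lam a)) ≠ 0 := ne_of_gt hεpos
    have hinj : Function.Injective φ := by
      intro u v huv
      have h1 : u - g = v - g := smul_right_injective _ (inv_ne_zero hεne) huv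
      exact sub_left_injective h1
    have hdist : ∀ u v : EuclideanSpace ℝ (Fin d),
        dist (φ u) (φ v) = (δ / (2 * lam a))⁻¹ * dist u v := by
      intro u v
      rw [dist_eq_norm, hφdef]
      simp only
      rw [← smul_sub, norm_smul, Real.norm_eq_abs, abs_of_pos (inv_pos.mpr hεpos),
        sub_sub_sub_cancel_right, ← dist_eq_norm]
    set A := (G.filter (fun h => dist g h < B / lam a)).image φ with hAdef
    have hcard : A.card = (G.filter (fun h => dist g h < B / lam a)).card :=
      Finset.card_image_of_injective _ hinj
    have hratio : (δ / (2 * lam a))⁻¹ * (B / lam a) = 2 * B / δ := by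
      field_simp
    have hsubK : ↑A ⊆ Metric.closedBall (0 : EuclideanSpace ℝ (Fin d)) (2 * B / δ) := by
      intro z hz
      simp only [hAdef, Finset.coe_image, Set.mem_image, Finset.mem_coe,
        Finset.mem_filter] at hz
      obtain ⟨u, ⟨huG, hud⟩, rfl⟩ := hz
      rw [Metric.mem_closedBall, dist_zero_right, hφdef]
      simp only
      rw [norm_smul, Real.norm_eq_abs, abs_of_pos (inv_pos.mpr hεpos)]
      have : ‖u - g‖ = dist u g := (dist_eq_norm u g).symm
      rw [this, dist_comm u g]
      calc (δ / (2 * lam a))⁻¹ * dist g u ≤ (δ / (2 * lam a))⁻¹ * (B / lam a) := by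
            apply mul_le_mul_of_nonneg_left hud.le (by positivity)
        _ = 2 * B / δ := hratio
    have hsepA : ∀ z ∈ A, ∀ w ∈ A, z ≠ w → 1 ≤ dist z w := by
      intro z hz w hw hzw
      simp only [hAdef, Finset.mem_image, Finset.mem_filter] at hz hw
      obtain ⟨u, ⟨huG, _⟩, rfl⟩ := hz
      obtain ⟨v, ⟨hvG, _⟩, rfl⟩ := hw
      have huv : u ≠ v := fun h => hzw (by rw [h])
      have hsep := hGsep u huG v hvG huv
      rw [hdist u v]
      calc (1:ℝ) = (δ / (2 * lam a))⁻¹ * (δ / (2 * lam a)) := (inv_mul_cancel₀ hεne).symm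
        _ ≤ (δ / (2 * lam a))⁻¹ * dist u v := by
            apply mul_le_mul_of_nonneg_left hsep (by positivity)
    have := hT₀ A hsubK hsepA
    omega
  obtain ⟨f, hf1, hf2⟩ := coloring hspos T G hdeg
  -- the classes
  set cls : ℕ → Finset (EuclideanSpace ℝ (Fin d)) := fun n =>
    if a ≤ n ∧ n < a + L ∧ (n - a) % b = 0 then
      G.filter (fun g => f g = (n - a) / b) else ∅ with hclsdef
  have hclsG : ∀ n, cls n ⊆ G := by
    intro n
    rw [hclsdef]
    by_cases h : a ≤ n ∧ n < a + L ∧ (n - a) % b = 0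
    · simp only [if_pos h]; exact Finset.filter_subset _ _
    · simp only [if_neg h]; exact Finset.empty_subset _
  have hact : ∀ n, 0 < (cls n).card → a ≤ n ∧ n < a + L ∧ (n - a) % b = 0 := by
    intro n hn
    by_contra h
    rw [hclsdef] at hn
    simp only [if_neg h] at hn
    simp at hn
  have hcol : ∀ n g, g ∈ cls n → f g = (n - a) / b := by
    intro n g hg
    rw [hclsdef] at hg
    by_cases h : a ≤ n ∧ n < a + L ∧ (n - a) % b = 0
    · simp only [if_pos h, Finset.mem_filter] at hg
      exact hg.2
    · simp only [if_neg h, Finset.notMem_empty] at hg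
  have hn_eq : ∀ n, a ≤ n → (n - a) % b = 0 → n = a + ((n - a) / b) * b := by
    intro n h1 h3
    have := Nat.div_mul_cancel (Nat.dvd_of_mod_eq_zero h3)
    omega
  have hnorm1 : ∀ g ∈ G, ‖g‖ = 1 := by
    intro g hg
    have := hGsub hg
    rwa [mem_sphere_zero_iff_norm] at this
  -- the key λ-gap across distinct active indices
  have hkey : ∀ n m : ℕ, a ≤ n → (n - a) % b = 0 → a ≤ m → (m - a) % b = 0 → n < m →
      lam n + B ≤ lam m := by
    intro n m h1 h2 h3 h4 hlt
    have hne : n = a + ((n - a) / b) * b := hn_eq n h1 h2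
    have hme : m = a + ((m - a) / b) * b := hn_eq m h3 h4
    have hcc : ((n - a) / b) * b < ((m - a) / b) * b := by omega
    have hcc2 : (n - a) / b < (m - a) / b := lt_of_mul_lt_mul_right hcc (by omega)
    have hmb : n + b ≤ m := by
      have : ((n - a) / b + 1) * b ≤ ((m - a) / b) * b :=
        Nat.mul_le_mul_right b hcc2
      have hexp : ((n - a) / b + 1) * b = ((n - a) / b) * b + b := by ring
      omega
    have htel := telescope lam hgap n (by omega) b
    have hmono2 : lam (n + b) ≤ lam m := hmono.monotone hmb
    linarith
  refine ⟨fun n => (cls n).card, fun n k => pickF 0 (cls n) k, ?_, ?_, ?_⟩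
  · -- norms
    intro n k _ _ hk1 hk2
    exact hnorm1 _ (hclsG n (pickF_mem 0 (cls n) hk1 hk2))
  · -- covering
    intro y hy
    obtain ⟨g, hgG, hdisty⟩ := hGcov y (mem_sphere_zero_iff_norm.mpr hy)
    have hcT : f g < T := hf1 g hgG
    set n : ℕ := a + (f g) * b with hndef
    have hcb : (f g) * b < L := by
      rw [hLdef]
      exact Nat.mul_lt_mul_of_lt_of_le hcT le_rfl (by omega)
    have hcond : a ≤ n ∧ n < a + L ∧ (n - a) % b = 0 := by
      refine ⟨Nat.le_add_right _ _, by omega, ?_⟩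
      have : n - a = (f g) * b := by omega
      rw [this]
      exact Nat.mul_mod_left _ _
    have hdivc : (n - a) / b = f g := by
      have h1 : n - a = (f g) * b := by omega
      rw [h1]
      exact Nat.mul_div_cancel _ (by omega)
    have hclsn : cls n = G.filter (fun g' => f g' = f g) := by
      rw [hclsdef]
      simp only [if_pos hcond, hdivc]
    have hgcls : g ∈ cls n := by
      rw [hclsn]
      exact Finset.mem_filter.mpr ⟨hgG, rfl⟩
    obtain ⟨k, hk1, hk2, hkeq⟩ := pickF_eq 0 (cls n) hgcls
    have hna : a ≤ n := Nat.le_add_right _ _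
    refine ⟨n, k, by omega, by omega, hk1, hk2, ?_⟩
    show dist y (pickF 0 (cls n) k) < δ / lam n
    rw [hkeq]
    have hlamn : lam n < 2 * lam a := by
      have h1 : n ≤ a + L := by omega
      have h2 : lam n ≤ lam (a + L) := hmono.monotone h1
      linarith
    have hlt : δ / (2 * lam a) ≤ δ / lam n := by
      apply div_le_div_of_nonneg_left hδ.le (hpos n) hlamn.le
    exact lt_of_lt_of_le hdisty hlt
  · -- separation
    intro n m k j _ _ _ _ hk1 hk2 hj1 hj2 hne
    have hk2' : k ≤ (cls n).card := hk2
    have hj2' : j ≤ (cls m).card := hj2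
    obtain ⟨han, hnL, hmodn⟩ := hact n (by omega)
    obtain ⟨ham, hmL, hmodm⟩ := hact m (by omega)
    have hgmem := pickF_mem 0 (cls n) hk1 hk2'
    have hwmem := pickF_mem 0 (cls m) hj1 hj2'
    have hgG : pickF 0 (cls n) k ∈ G := hclsG n hgmem
    have hwG : pickF 0 (cls m) j ∈ G := hclsG m hwmem
    have hgnorm := hnorm1 _ hgG
    have hwnorm := hnorm1 _ hwG
    have hng : ‖lam n • pickF 0 (cls n) k‖ = lam n := by
      rw [norm_smul, Real.norm_eq_abs, abs_of_pos (hpos n), hgnorm, mul_one]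
    have hnw : ‖lam m • pickF 0 (cls m) j‖ = lam m := by
      rw [norm_smul, Real.norm_eq_abs, abs_of_pos (hpos m), hwnorm, mul_one]
    by_cases hnm : n = m
    · subst hnm
      have hkj : k ≠ j := fun h => hne (by rw [h])
      have hgw : pickF 0 (cls n) k ≠ pickF 0 (cls n) j :=
        pickF_inj 0 (cls n) hk1 hk2' hj1 hj2' hkj
      have hfeq : f (pickF 0 (cls n) k) = f (pickF 0 (cls n) j) := by
        rw [hcol n _ hgmem, hcol n _ hwmem]
      have hsep := hf2 _ hgG _ hwG hgw hfeq
      have hlan : lam a ≤ lam n := hmono.monotone han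
      have hnormeq : ‖lam n • pickF 0 (cls n) k - lam n • pickF 0 (cls n) j‖ =
          lam n * dist (pickF 0 (cls n) k) (pickF 0 (cls n) j) := by
        rw [← smul_sub, norm_smul, Real.norm_eq_abs, abs_of_pos (hpos n), dist_eq_norm]
      rw [hnormeq]
      calc B = lam a * (B / lam a) := by field_simp
        _ ≤ lam n * dist (pickF 0 (cls n) k) (pickF 0 (cls n) j) :=
            mul_le_mul hlan hsep hspos.le (hpos n).le
    · have habs : |lam n - lam m| ≥ B := by
        rcases lt_or_gt_of_ne hnm with hlt | hlt
        · have := hkey n m han hmodn ham hmodm hlt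
          rw [abs_sub_comm]
          rw [abs_of_pos (by linarith [hB] : (0:ℝ) < lam m - lam n)]
          linarith
        · have := hkey m n ham hmodm han hmodn hlt
          rw [abs_of_pos (by linarith [hB] : (0:ℝ) < lam n - lam m)]
          linarith
      calc B ≤ |lam n - lam m| := habs
        _ = |‖lam n • pickF 0 (cls n) k‖ - ‖lam m • pickF 0 (cls m) j‖| := by
            rw [hng, hnw]
        _ ≤ ‖lam n • pickF 0 (cls n) k - lam m • pickF 0 (cls m) j‖ :=
            abs_norm_sub_norm_le _ _
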